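/- Fix an integer m ≥ 1. For n ≥ 2m define the probability density D_{m,n} on [0,π]^m by D_{m,n}(θ) = c_{m,n} | ∏_{1≤i<j≤m} sin²(θᵢ+θⱼ) sin²(θᵢ−θⱼ) · ∏_{i=1}^m sin(2θᵢ) (sin θᵢ)^{2(n−2m)} |, where the constant c_{m,n} > 0 is chosen so that ∫_{[0,π]^m} D_{m,n}(θ) dθ₁⋯dθ_m = 1. Then for every continuous function f on [0,π]^m × [0,π]^m, lim_{n→∞} ∫_{[0,π]^m × [0,π]^m} f(θ, ζ) D_{m,n}(θ) D_{m,n}(ζ) dθ dζ = f(π/2,…,π/2; π/2,…,π/2). -/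

import Mathlib

open MeasureTheory Filter
open Real

/-- The (unnormalized) density of the Cartan decomposition for the symmetric pair
`(U(n), U(m) × U(n−m))` on `[0,π]^m`:
`|∏_{i<j} sin²(θᵢ+θⱼ) sin²(θᵢ−θⱼ) ∏ᵢ sin(2θᵢ) (sin θᵢ)^{2(n−2m)}|`. -/
noncomputable def cartanDensity (m n : ℕ) (θ : Fin m → ℝ) : ℝ :=
  |(∏ i : Fin m, ∏ j : Fin m,
      if i < j then (Real.sin (θ i + θ j)) ^ 2 * (Real.sin (θ i - θ j)) ^ 2 else 1) *
    ∏ i : Fin m, Real.sin (2 * θ i) * (Real.sin (θ i)) ^ (2 * (n - 2 * m))|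

noncomputable def cartanFixed (m : ℕ) (θ : Fin m → ℝ) : ℝ :=
  |(∏ i : Fin m, ∏ j : Fin m,
      if i < j then (Real.sin (θ i + θ j)) ^ 2 * (Real.sin (θ i - θ j)) ^ 2 else 1) *
    ∏ i : Fin m, Real.sin (2 * θ i)|

lemma cartan_nonneg (m n : ℕ) (θ : Fin m → ℝ) : 0 ≤ cartanDensity m n θ := abs_nonneg _

lemma cartan_eq (m n : ℕ) (θ : Fin m → ℝ) (hθ : ∀ i, 0 ≤ Real.sin (θ i)) :
    cartanDensity m n θ =
      cartanFixed m θ * (∏ i : Fin m, Real.sin (θ i)) ^ (2 * (n - 2 * m)) := by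
  unfold cartanDensity cartanFixed
  rw [Finset.prod_mul_distrib, Finset.prod_pow, ← mul_assoc, abs_mul]
  congr 1
  rw [abs_of_nonneg]
  exact pow_nonneg (Finset.prod_nonneg fun i _ => hθ i) _

lemma cartanFixed_nonneg (m : ℕ) (θ : Fin m → ℝ) : 0 ≤ cartanFixed m θ := abs_nonneg _

lemma cartanFixed_le_one (m : ℕ) (θ : Fin m → ℝ) : cartanFixed m θ ≤ 1 := by
  unfold cartanFixed
  rw [abs_mul]
  have h1 : |∏ i : Fin m, ∏ j : Fin m,
      if i < j then (Real.sin (θ i + θ j)) ^ 2 * (Real.sin (θ i - θ j)) ^ 2 else 1| ≤ 1 := by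
    rw [Finset.abs_prod]
    refine Finset.prod_le_one (fun i _ => abs_nonneg _) (fun i _ => ?_)
    rw [Finset.abs_prod]
    refine Finset.prod_le_one (fun j _ => abs_nonneg _) (fun j _ => ?_)
    split
    · rw [abs_of_nonneg (by positivity)]
      exact mul_le_one₀ (Real.sin_sq_le_one _) (by positivity) (Real.sin_sq_le_one _)
    · simp
  have h2 : |∏ i : Fin m, Real.sin (2 * θ i)| ≤ 1 := by
    rw [Finset.abs_prod]
    exact Finset.prod_le_one (fun i _ => abs_nonneg _) (fun i _ => Real.abs_sin_le_one _)
  exact mul_le_one₀ h1 (abs_nonneg _) h2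

lemma cartanFixed_continuous (m : ℕ) : Continuous (cartanFixed m) := by
  unfold cartanFixed
  refine Continuous.abs (Continuous.mul ?_ ?_)
  · refine continuous_finset_prod _ (fun i _ => continuous_finset_prod _ (fun j _ => ?_))
    split
    · fun_prop
    · fun_prop
  · fun_prop

lemma cartan_continuous (m n : ℕ) : Continuous (cartanDensity m n) := by
  unfold cartanDensity
  refine Continuous.abs (Continuous.mul ?_ ?_)
  · refine continuous_finset_prod _ (fun i _ => continuous_finset_prod _ (fun j _ => ?_))
    split
    · fun_prop
    · fun_prop
  · fun_prop

lemma cartan_le (m n : ℕ) (θ : Fin m → ℝ) (hθ : ∀ i, 0 ≤ Real.sin (θ i)) :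
    cartanDensity m n θ ≤ (∏ i : Fin m, Real.sin (θ i)) ^ (2 * (n - 2 * m)) := by
  rw [cartan_eq m n θ hθ]
  calc cartanFixed m θ * (∏ i : Fin m, Real.sin (θ i)) ^ (2 * (n - 2 * m))
      ≤ 1 * (∏ i : Fin m, Real.sin (θ i)) ^ (2 * (n - 2 * m)) := by
        exact mul_le_mul_of_nonneg_right (cartanFixed_le_one m θ)
          (pow_nonneg (Finset.prod_nonneg fun i _ => hθ i) _)
    _ = _ := one_mul _

lemma prod_sin_lt_one (m : ℕ) (θ : Fin m → ℝ) (hθ : ∀ i, θ i ∈ Set.Icc 0 π)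
    (i0 : Fin m) (hne : θ i0 ≠ π / 2) : ∏ i : Fin m, Real.sin (θ i) < 1 := by
  have h0 : ∀ i, 0 ≤ Real.sin (θ i) := fun i =>
    Real.sin_nonneg_of_nonneg_of_le_pi (hθ i).1 (hθ i).2
  have h1 : Real.sin (θ i0) < 1 := by
    rcases lt_or_gt_of_ne hne with h | h
    · have := Real.sin_lt_sin_of_lt_of_le_pi_div_two
        (by linarith [(hθ i0).1, Real.pi_pos] : -(π/2) ≤ θ i0) (le_refl (π/2)) h
      simpa using this
    · have h2 : Real.sin (θ i0) = Real.sin (π - θ i0) := (Real.sin_pi_sub _).symm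
      rw [h2]
      have := Real.sin_lt_sin_of_lt_of_le_pi_div_two
        (by linarith [(hθ i0).2, Real.pi_pos] : -(π/2) ≤ π - θ i0) (le_refl (π/2))
        (by linarith : π - θ i0 < π/2)
      simpa using this
  calc ∏ i : Fin m, Real.sin (θ i)
      = (∏ i ∈ Finset.univ.erase i0, Real.sin (θ i)) * Real.sin (θ i0) :=
        (Finset.prod_erase_mul _ _ (Finset.mem_univ i0)).symm
    _ ≤ Real.sin (θ i0) := mul_le_of_le_one_left (h0 i0)
        (Finset.prod_le_one (fun i _ => h0 i) (fun i _ => Real.sin_le_one _))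
    _ < 1 := h1

section box
variable (m : ℕ) (t : ℝ)

lemma box_bounds (hm : 1 ≤ m) (ht : 0 < t) (ht2 : 4 * m * t < π)
    (θ : Fin m → ℝ)
    (hθ : ∀ i : Fin m, θ i ∈ Set.Icc (π/2 - (2*(i:ℝ)+2)*t) (π/2 - (2*(i:ℝ)+1)*t)) :
    (∀ i, 0 < θ i ∧ θ i ≤ π/2 ∧ π/2 - 2*m*t ≤ θ i) ∧
    0 < cartanFixed m θ := by
  have hit : ∀ i : Fin m, ((i : ℕ) : ℝ) + 1 ≤ m := fun i => by exact_mod_cast i.isLt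
  have hcoord : ∀ i, 0 < θ i ∧ θ i ≤ π/2 ∧ π/2 - 2*m*t ≤ θ i := by
    intro i
    have h1 := (hθ i).1; have h2 := (hθ i).2; have h3 := hit i
    refine ⟨by nlinarith, by nlinarith, by nlinarith⟩
  refine ⟨hcoord, ?_⟩
  rw [cartanFixed, abs_pos]
  apply mul_ne_zero
  · rw [Finset.prod_ne_zero_iff]
    intro i _
    rw [Finset.prod_ne_zero_iff]
    intro j _
    split
    · rename_i hij
      have hij' : ((i:ℕ):ℝ) + 1 ≤ ((j:ℕ):ℝ) := by exact_mod_cast hij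
      have h1 := (hθ i).1; have h2 := (hθ i).2
      have h3 := (hθ j).1; have h4 := (hθ j).2
      have h5 := hit i; have h6 := hit j
      apply mul_ne_zero <;> apply pow_ne_zero <;> apply ne_of_gt <;>
        apply Real.sin_pos_of_pos_of_lt_pi <;> nlinarith
    · exact one_ne_zero
  · rw [Finset.prod_ne_zero_iff]
    intro i _
    have h1 := (hθ i).1; have h2 := (hθ i).2; have h3 := hit i
    exact ne_of_gt (Real.sin_pos_of_pos_of_lt_pi (by nlinarith) (by nlinarith))

lemma box_sin_ge (hm : 1 ≤ m) (ht : 0 < t) (ht2 : 4 * m * t < π)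
    (θ : Fin m → ℝ)
    (hθ : ∀ i : Fin m, θ i ∈ Set.Icc (π/2 - (2*(i:ℝ)+2)*t) (π/2 - (2*(i:ℝ)+1)*t)) :
    ∀ i, Real.cos (2*m*t) ≤ Real.sin (θ i) := by
  intro i
  obtain ⟨h0, h1, h2⟩ := (box_bounds m t hm ht ht2 θ hθ).1 i
  have : Real.cos (2*m*t) = Real.sin (π/2 - 2*m*t) := (Real.sin_pi_div_two_sub _).symm
  rw [this]
  exact Real.sin_le_sin_of_le_of_le_pi_div_two (by nlinarith [Real.pi_pos]) h1 h2
end box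
lemma exists_box_t (m : ℕ) (q : ℝ) (hq : q < 1) :
    ∃ t : ℝ, 0 < t ∧ 4 * m * t < π ∧ q < Real.cos (2 * m * t) ^ m := by
  have hcont : ContinuousAt (fun t : ℝ => Real.cos (2 * m * t) ^ m) 0 := by fun_prop
  have h1 : (fun t : ℝ => Real.cos (2 * m * t) ^ m) 0 = 1 := by simp
  have hev : ∀ᶠ t : ℝ in nhds 0, q < Real.cos (2 * m * t) ^ m := by
    have := hcont.eventually (eventually_gt_nhds (by rw [h1] at *; exact hq :
      q < (fun t : ℝ => Real.cos (2 * m * t) ^ m) 0))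
    exact this
  rw [Metric.eventually_nhds_iff] at hev
  obtain ⟨δ, hδ, hδ'⟩ := hev
  refine ⟨min (δ/2) (π / (8 * m + 8)), ?_, ?_, ?_⟩
  · have := Real.pi_pos; positivity
  · have h2 : (4:ℝ) * m * min (δ/2) (π / (8 * m + 8)) ≤ 4 * m * (π / (8 * m + 8)) := by
      apply mul_le_mul_of_nonneg_left (min_le_right _ _) (by positivity)
    have h3 : (4:ℝ) * m * (π / (8 * m + 8)) < π := by
      have hdpos : 0 < π / (8 * (m:ℝ) + 8) := by positivity
      have hd : ((8:ℝ) * m + 8) * (π / (8 * m + 8)) = π := by field_simp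
      nlinarith [hdpos, Nat.cast_nonneg (α := ℝ) m, hd]
    linarith
  · apply hδ'
    have := Real.pi_pos
    rw [Real.dist_eq, sub_zero, abs_of_nonneg (by positivity)]
    calc min (δ/2) (π / (8 * m + 8)) ≤ δ/2 := min_le_left _ _
      _ < δ := by linarith

lemma cartan_concentration (m : ℕ) (hm : 1 ≤ m) (c : ℕ → ℝ)
    (hc : ∀ n, 2 * m ≤ n → 0 < c n ∧
      ∫ θ in Set.univ.pi fun _ : Fin m => Set.Icc (0 : ℝ) π,
        c n * cartanDensity m n θ = 1)
    (ε₁ : ℝ) (hε₁ : 0 < ε₁) (hε₁' : ε₁ ≤ 1) :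
    Tendsto (fun n => c n *
      ∫ θ in (Set.univ.pi fun _ : Fin m => Set.Icc (0 : ℝ) π) \
        Metric.ball (fun _ : Fin m => π / 2) ε₁, cartanDensity m n θ)
      atTop (nhds 0) := by
  have hπ := Real.pi_pos
  set S : Set (Fin m → ℝ) := Set.univ.pi fun _ : Fin m => Set.Icc (0 : ℝ) π with hSdef
  set p : Fin m → ℝ := fun _ => π / 2 with hpdef
  have hSm : MeasurableSet S := MeasurableSet.univ_pi fun _ => measurableSet_Icc
  have hScomp : IsCompact S := isCompact_univ_pi fun _ => isCompact_Icc
  have hSmem : ∀ θ ∈ S, ∀ i, θ i ∈ Set.Icc (0:ℝ) π := fun θ hθ i => hθ i (Set.mem_univ i)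
  have hsin0 : ∀ θ ∈ S, ∀ i, 0 ≤ Real.sin (θ i) := fun θ hθ i =>
    Real.sin_nonneg_of_nonneg_of_le_pi (hSmem θ hθ i).1 (hSmem θ hθ i).2
  set K : Set (Fin m → ℝ) := S \ Metric.ball p ε₁ with hKdef
  have hKS : K ⊆ S := Set.diff_subset
  have hKm : MeasurableSet K := hSm.diff measurableSet_ball
  have hKcomp : IsCompact K := hScomp.diff Metric.isOpen_ball
  set g : (Fin m → ℝ) → ℝ := fun θ => ∏ i : Fin m, Real.sin (θ i) with hgdef
  have hgcont : Continuous g := by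
    apply continuous_finset_prod; intro i _; fun_prop
  -- q
  by_cases hKne : K.Nonempty
  swap
  · -- K empty: the integral is 0 for all n
    rw [Set.not_nonempty_iff_eq_empty] at hKne
    simp only [hKne, Measure.restrict_empty, integral_zero_measure, mul_zero]
    exact tendsto_const_nhds
  obtain ⟨x₀, hx₀K, hx₀max⟩ := hKcomp.exists_isMaxOn hKne hgcont.continuousOn
  set q : ℝ := g x₀ with hqdef
  have hq0 : 0 ≤ q := Finset.prod_nonneg fun i _ => hsin0 x₀ hx₀K.1 i
  have hq1 : q < 1 := by
    have hx₀ne : x₀ ≠ p := by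
      intro h
      exact hx₀K.2 (by rw [h]; exact Metric.mem_ball_self hε₁)
    obtain ⟨i0, hi0⟩ := Function.ne_iff.mp hx₀ne
    exact prod_sin_lt_one m x₀ (hSmem x₀ hx₀K.1) i0 hi0
  have hgK : ∀ θ ∈ K, g θ ≤ q := hx₀max
  -- t, ρ, box
  obtain ⟨t, ht, ht4, htq⟩ := exists_box_t m q hq1
  set ρ : ℝ := Real.cos (2 * m * t) with hρdef
  have hρpos : 0 < ρ := by
    apply Real.cos_pos_of_mem_Ioo
    constructor
    · nlinarith [Nat.cast_nonneg (α := ℝ) m]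
    · nlinarith [(by exact_mod_cast hm : (1:ℝ) ≤ (m:ℝ))]
  set Box : Set (Fin m → ℝ) :=
    Set.univ.pi fun i : Fin m => Set.Icc (π/2 - (2*(i:ℝ)+2)*t) (π/2 - (2*(i:ℝ)+1)*t)
    with hBoxdef
  have hBoxmem : ∀ θ ∈ Box, ∀ i : Fin m,
      θ i ∈ Set.Icc (π/2 - (2*(i:ℝ)+2)*t) (π/2 - (2*(i:ℝ)+1)*t) :=
    fun θ hθ i => hθ i (Set.mem_univ i)
  have hBoxm : MeasurableSet Box := MeasurableSet.univ_pi fun _ => measurableSet_Icc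
  have hBoxcomp : IsCompact Box := isCompact_univ_pi fun _ => isCompact_Icc
  have hBoxne : Box.Nonempty := by
    refine ⟨fun i => π/2 - (2*(i:ℝ)+2)*t, fun i _ => ?_⟩
    exact ⟨le_refl _, by nlinarith [Nat.cast_nonneg (α := ℝ) (i : ℕ)]⟩
  have hBoxS : Box ⊆ S := by
    intro θ hθ i _
    obtain ⟨h0, h1, _⟩ := (box_bounds m t hm ht ht4 θ (hBoxmem θ hθ)).1 i
    exact ⟨le_of_lt h0, by linarith⟩
  have hvolBox : (volume Box).toReal = t ^ m := by
    rw [hBoxdef, volume_pi_pi]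
    simp only [Real.volume_Icc]
    have : ∀ i : Fin m, ENNReal.ofReal ((π/2 - (2*(i:ℝ)+1)*t) - (π/2 - (2*(i:ℝ)+2)*t))
        = ENNReal.ofReal t := by
      intro i; congr 1; ring
    rw [Finset.prod_congr rfl (fun i _ => this i), Finset.prod_const,
      Finset.card_univ, Fintype.card_fin, ← ENNReal.ofReal_pow ht.le,
      ENNReal.toReal_ofReal (by positivity)]
  -- a
  obtain ⟨y₀, hy₀Box, hy₀min⟩ := hBoxcomp.exists_isMinOn hBoxne
    (cartanFixed_continuous m).continuousOn
  set a : ℝ := cartanFixed m y₀ with hadef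
  have ha : 0 < a := (box_bounds m t hm ht ht4 y₀ (hBoxmem y₀ hy₀Box)).2
  have haF : ∀ θ ∈ Box, a ≤ cartanFixed m θ := hy₀min
  -- lower bound for ∫_S cartan
  have hlow : ∀ n : ℕ, a * (ρ ^ m) ^ (2 * (n - 2 * m)) * t ^ m ≤
      ∫ θ in S, cartanDensity m n θ := by
    intro n
    have hint : IntegrableOn (cartanDensity m n) S volume :=
      (cartan_continuous m n).continuousOn.integrableOn_compact hScomp
    have h1 : a * (ρ ^ m) ^ (2 * (n - 2 * m)) * (volume Box).toReal ≤
        ∫ θ in Box, cartanDensity m n θ := by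
      apply setIntegral_ge_of_const_le_real hBoxm
        (ne_of_lt hBoxcomp.measure_lt_top)
      · intro θ hθ
        have hsin := box_sin_ge m t hm ht ht4 θ (hBoxmem θ hθ)
        have hgρ : ρ ^ m ≤ g θ := by
          rw [hgdef]
          calc ρ ^ m = ∏ _i : Fin m, ρ := by
                rw [Finset.prod_const, Finset.card_univ, Fintype.card_fin]
            _ ≤ ∏ i : Fin m, Real.sin (θ i) :=
                Finset.prod_le_prod (fun i _ => hρpos.le) (fun i _ => hsin i)
        rw [cartan_eq m n θ (fun i => hsin0 θ (hBoxS hθ) i)]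
        apply mul_le_mul (haF θ hθ)
          (pow_le_pow_left₀ (by positivity) hgρ _) (by positivity)
          (le_trans ha.le (haF θ hθ))
      · exact hint.mono_set hBoxS
    calc a * (ρ ^ m) ^ (2 * (n - 2 * m)) * t ^ m
        = a * (ρ ^ m) ^ (2 * (n - 2 * m)) * (volume Box).toReal := by rw [hvolBox]
      _ ≤ ∫ θ in Box, cartanDensity m n θ := h1
      _ ≤ ∫ θ in S, cartanDensity m n θ := by
          apply setIntegral_mono_set hint
          · filter_upwards with θ using cartan_nonneg m n θ
          · exact hBoxS.eventuallyLE
  -- upper bound for ∫_K cartan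
  have hup : ∀ n : ℕ, ∫ θ in K, cartanDensity m n θ ≤
      q ^ (2 * (n - 2 * m)) * (volume K).toReal := by
    intro n
    have h := norm_setIntegral_le_of_norm_le_const (f := cartanDensity m n) (C := q ^ (2 * (n - 2 * m)))
      (hKcomp.measure_lt_top : volume K < ⊤) ?_
    · exact le_trans (le_abs_self _) h
    · intro θ hθ
      rw [Real.norm_eq_abs, abs_of_nonneg (cartan_nonneg m n θ)]
      calc cartanDensity m n θ ≤ (g θ) ^ (2 * (n - 2 * m)) :=
            cartan_le m n θ (hsin0 θ (hKS hθ))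
        _ ≤ q ^ (2 * (n - 2 * m)) := by
            apply pow_le_pow_left₀ (Finset.prod_nonneg fun i _ => hsin0 θ (hKS hθ) i)
              (hgK θ hθ)
  -- squeeze
  have hx01 : 0 ≤ q / ρ ^ m ∧ q / ρ ^ m < 1 := by
    constructor
    · positivity
    · rw [div_lt_one (by positivity)]; exact htq
  set C : ℝ := (volume K).toReal / (a * t ^ m) with hCdef
  have hC0 : 0 ≤ C := by
    apply div_nonneg ENNReal.toReal_nonneg (by positivity)
  apply squeeze_zero' (g := fun n => C * ((q / ρ ^ m) ^ 2) ^ (n - 2 * m))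
  · filter_upwards [eventually_ge_atTop (2 * m)] with n hn
    exact mul_nonneg (hc n hn).1.le (setIntegral_nonneg hKm fun θ _ => cartan_nonneg m n θ)
  · filter_upwards [eventually_ge_atTop (2 * m)] with n hn
    obtain ⟨hcn, hint1⟩ := hc n hn
    rw [integral_const_mul] at hint1
    have hintS : (0:ℝ) < ∫ θ in S, cartanDensity m n θ := by
      nlinarith [hlow n, pow_pos hρpos m, pow_pos (pow_pos hρpos m) (2 * (n - 2*m)),
        pow_pos ht m]
    have hcnval : c n = (∫ θ in S, cartanDensity m n θ)⁻¹ := by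
      field_simp at hint1 ⊢
      linarith [hint1]
    have hcnle : c n ≤ (a * (ρ ^ m) ^ (2 * (n - 2 * m)) * t ^ m)⁻¹ := by
      rw [hcnval]
      apply inv_anti₀ (by positivity) (hlow n)
    calc c n * ∫ θ in K, cartanDensity m n θ
        ≤ (a * (ρ ^ m) ^ (2 * (n - 2 * m)) * t ^ m)⁻¹ *
          (q ^ (2 * (n - 2 * m)) * (volume K).toReal) := by
          apply mul_le_mul hcnle (hup n)
            (setIntegral_nonneg hKm fun θ _ => cartan_nonneg m n θ) (by positivity)
      _ = C * ((q / ρ ^ m) ^ 2) ^ (n - 2 * m) := by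
          rw [hCdef, ← pow_mul, div_pow, ← pow_mul]
          field_simp
          linear_combination (-(q ^ (2 * (n - 2 * m)) * (volume K).toReal)) *
            mul_inv_cancel₀ (pow_ne_zero (m * (2 * (n - 2 * m))) hρpos.ne')
  · rw [← mul_zero C]
    apply Tendsto.const_mul
    exact (tendsto_pow_atTop_nhds_zero_of_lt_one (sq_nonneg _)
      (pow_lt_one₀ hx01.1 hx01.2 two_ne_zero)).comp (tendsto_sub_atTop_nat (2 * m))
/-- With `D_{m,n} = c_{m,n} ·` `cartanDensity m n` a probability density on
`[0,π]^m` (for `n ≥ 2m`), for every continuous function `f` on `[0,π]^m × [0,π]^m`,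
`lim_{n→∞} ∫∫ f(θ,ζ) D_{m,n}(θ) D_{m,n}(ζ) dθ dζ = f(π/2,…,π/2; π/2,…,π/2)`. -/
theorem cartan_density_concentration
    (m : ℕ) (hm : 1 ≤ m) (c : ℕ → ℝ)
    (hc : ∀ n, 2 * m ≤ n → 0 < c n ∧
      ∫ θ in Set.univ.pi fun _ : Fin m => Set.Icc (0 : ℝ) Real.pi,
        c n * cartanDensity m n θ = 1)
    (f : (Fin m → ℝ) → (Fin m → ℝ) → ℝ)
    (hf : ContinuousOn (fun p : (Fin m → ℝ) × (Fin m → ℝ) => f p.1 p.2)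
      ((Set.univ.pi fun _ : Fin m => Set.Icc (0 : ℝ) Real.pi) ×ˢ
        (Set.univ.pi fun _ : Fin m => Set.Icc (0 : ℝ) Real.pi))) :
    Tendsto (fun n : ℕ =>
        ∫ θ in Set.univ.pi fun _ : Fin m => Set.Icc (0 : ℝ) Real.pi,
          ∫ ζ in Set.univ.pi fun _ : Fin m => Set.Icc (0 : ℝ) Real.pi,
            f θ ζ * (c n * cartanDensity m n θ) * (c n * cartanDensity m n ζ))
      atTop
      (nhds (f (fun _ => Real.pi / 2) (fun _ => Real.pi / 2))) := by
  have hπ := Real.pi_pos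
  set S : Set (Fin m → ℝ) := Set.univ.pi fun _ : Fin m => Set.Icc (0 : ℝ) π with hSdef
  set p : Fin m → ℝ := fun _ => π / 2 with hpdef
  set L : ℝ := f p p with hLdef
  have hSm : MeasurableSet S := MeasurableSet.univ_pi fun _ => measurableSet_Icc
  have hScomp : IsCompact S := isCompact_univ_pi fun _ => isCompact_Icc
  have hpS : p ∈ S := fun i _ => ⟨by positivity, by simp only [hpdef]; linarith⟩
  obtain ⟨M, hM⟩ := (hScomp.prod hScomp).exists_bound_of_continuousOn hf
  have hML : |L| ≤ M := hM (p, p) ⟨hpS, hpS⟩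
  have hM0 : 0 ≤ M := le_trans (abs_nonneg _) hML
  rw [Metric.tendsto_atTop]
  intro ε hε
  have hcw := hf (p, p) ⟨hpS, hpS⟩
  rw [Metric.continuousWithinAt_iff] at hcw
  obtain ⟨ε₀, hε₀, hball⟩ := hcw (ε/4) (by positivity)
  set ε₁ : ℝ := min ε₀ 1 with hε₁def
  have hε₁pos : 0 < ε₁ := lt_min hε₀ one_pos
  set K : Set (Fin m → ℝ) := S \ Metric.ball p ε₁ with hKdef
  have hKS : K ⊆ S := Set.diff_subset
  have hKm : MeasurableSet K := hSm.diff Metric.isOpen_ball.measurableSet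
  have hconc := cartan_concentration m hm c hc ε₁ hε₁pos (min_le_right _ _)
  set δ' : ℝ := ε / (16 * M + 16) with hδ'def
  have hδ'pos : 0 < δ' := by positivity
  obtain ⟨N₁, hN₁⟩ := (Metric.tendsto_atTop.mp hconc) δ' hδ'pos
  refine ⟨max N₁ (2 * m), fun n hn => ?_⟩
  have hn1 : N₁ ≤ n := le_trans (le_max_left _ _) hn
  have hn2 : 2 * m ≤ n := le_trans (le_max_right _ _) hn
  obtain ⟨hcn, hint1⟩ := hc n hn2
  set D : (Fin m → ℝ) → ℝ := fun θ => c n * cartanDensity m n θ with hDdef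
  have hD0 : ∀ θ, 0 ≤ D θ := fun θ => mul_nonneg hcn.le (cartan_nonneg m n θ)
  have hDc : Continuous D := continuous_const.mul (cartan_continuous m n)
  have hDi : Integrable D (volume.restrict S) :=
    hDc.continuousOn.integrableOn_compact hScomp
  have hD1 : ∫ θ in S, D θ = 1 := hint1
  set r : ℝ := ∫ θ in K, D θ with hrdef
  have hr0 : 0 ≤ r := setIntegral_nonneg hKm fun θ _ => hD0 θ
  have hrδ : r < δ' := by
    have h := hN₁ n hn1
    rw [Real.dist_eq, sub_zero] at h
    calc r = c n * ∫ θ in K, cartanDensity m n θ := integral_const_mul _ _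
      _ ≤ |c n * ∫ θ in K, cartanDensity m n θ| := le_abs_self _
      _ < δ' := h
  -- product measure machinery
  set ν : Measure (Fin m → ℝ) := volume.restrict S with hνdef
  have hprodrw : ν.prod ν
      = (volume : Measure ((Fin m → ℝ) × (Fin m → ℝ))).restrict (S ×ˢ S) := by
    rw [hνdef, Measure.prod_restrict, ← Measure.volume_eq_prod]
  have hfm : AEStronglyMeasurable (fun z : (Fin m → ℝ) × (Fin m → ℝ) => f z.1 z.2)
      (ν.prod ν) := by
    rw [hprodrw]
    exact hf.aestronglyMeasurable (hSm.prod hSm)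
  have hDDi : Integrable (fun z : (Fin m → ℝ) × (Fin m → ℝ) => D z.1 * D z.2)
      (ν.prod ν) := hDi.mul_prod hDi
  have haemem : ∀ᵐ z : (Fin m → ℝ) × (Fin m → ℝ) ∂ν.prod ν, z.1 ∈ S ∧ z.2 ∈ S := by
    rw [hprodrw]
    filter_upwards [ae_restrict_mem (hSm.prod hSm)] with z hz
    exact hz
  have hhi : Integrable (fun z : (Fin m → ℝ) × (Fin m → ℝ) => f z.1 z.2 * D z.1 * D z.2)
      (ν.prod ν) := by
    apply Integrable.mono' ((hDi.mul_prod hDi).const_mul M)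
    · exact (hfm.mul ((hDc.comp continuous_fst).aestronglyMeasurable)).mul
        ((hDc.comp continuous_snd).aestronglyMeasurable)
    · filter_upwards [haemem] with z hz
      have hfb : ‖f z.1 z.2‖ ≤ M := hM (z.1, z.2) (Set.mk_mem_prod hz.1 hz.2)
      rw [norm_mul, norm_mul]
      calc ‖f z.1 z.2‖ * ‖D z.1‖ * ‖D z.2‖ ≤ M * ‖D z.1‖ * ‖D z.2‖ := by
            apply mul_le_mul_of_nonneg_right
              (mul_le_mul_of_nonneg_right hfb (norm_nonneg _)) (norm_nonneg _)
        _ = M * (D z.1 * D z.2) := by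
            rw [Real.norm_of_nonneg (hD0 _), Real.norm_of_nonneg (hD0 _)]; ring
  have hiter : (∫ θ in S, ∫ ζ in S, f θ ζ * D θ * D ζ)
      = ∫ z : (Fin m → ℝ) × (Fin m → ℝ), f z.1 z.2 * D z.1 * D z.2 ∂(ν.prod ν) :=
    MeasureTheory.integral_integral hhi
  have hDD1 : ∫ z : (Fin m → ℝ) × (Fin m → ℝ), D z.1 * D z.2 ∂(ν.prod ν) = 1 := by
    rw [integral_prod_mul]
    rw [show (∫ x, D x ∂ν) = 1 from hD1]
    norm_num
  have hLint : Integrable (fun z : (Fin m → ℝ) × (Fin m → ℝ) => L * (D z.1 * D z.2))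
      (ν.prod ν) := hDDi.const_mul L
  have hsubeq : (fun z : (Fin m → ℝ) × (Fin m → ℝ) => (f z.1 z.2 - L) * (D z.1 * D z.2))
      = fun z => (f z.1 z.2 * D z.1 * D z.2) - L * (D z.1 * D z.2) :=
    funext fun z => by ring
  have hsubi : Integrable
      (fun z : (Fin m → ℝ) × (Fin m → ℝ) => (f z.1 z.2 - L) * (D z.1 * D z.2))
      (ν.prod ν) := by
    rw [hsubeq]; exact hhi.sub hLint
  have key : (∫ θ in S, ∫ ζ in S, f θ ζ * D θ * D ζ) - L
      = ∫ z : (Fin m → ℝ) × (Fin m → ℝ), (f z.1 z.2 - L) * (D z.1 * D z.2) ∂(ν.prod ν) := by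
    rw [hiter, hsubeq, integral_sub hhi hLint, integral_const_mul, hDD1, mul_one]
  -- bound function
  set B : (Fin m → ℝ) × (Fin m → ℝ) → ℝ := fun z =>
    (ε/4) * (D z.1 * D z.2) + (2*M) * (K.indicator D z.1 * D z.2)
      + (2*M) * (D z.1 * K.indicator D z.2) with hBdef
  have hBi : Integrable B (ν.prod ν) := by
    refine Integrable.add (Integrable.add ?_ ?_) ?_
    · exact (hDi.mul_prod hDi).const_mul _
    · exact ((hDi.indicator hKm).mul_prod hDi).const_mul _
    · exact (hDi.mul_prod (hDi.indicator hKm)).const_mul _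
  have hind0 : ∀ θ, 0 ≤ K.indicator D θ := fun θ => Set.indicator_nonneg (fun x _ => hD0 x) θ
  have hptw : ∀ᵐ z : (Fin m → ℝ) × (Fin m → ℝ) ∂ν.prod ν,
      ‖(f z.1 z.2 - L) * (D z.1 * D z.2)‖ ≤ B z := by
    filter_upwards [haemem] with z hz
    rw [norm_mul, Real.norm_of_nonneg (mul_nonneg (hD0 _) (hD0 _))]
    have hDD : 0 ≤ D z.1 * D z.2 := mul_nonneg (hD0 _) (hD0 _)
    by_cases h1 : z.1 ∈ Metric.ball p ε₁
    · by_cases h2 : z.2 ∈ Metric.ball p ε₁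
      · have hd : dist (z.1, z.2) (p, p) < ε₀ := by
          rw [Prod.dist_eq]
          exact max_lt (lt_of_lt_of_le (Metric.mem_ball.mp h1) (min_le_left _ _))
            (lt_of_lt_of_le (Metric.mem_ball.mp h2) (min_le_left _ _))
        have hfl : ‖f z.1 z.2 - L‖ ≤ ε/4 :=
          le_of_lt (hball (Set.mk_mem_prod hz.1 hz.2) hd)
        calc ‖f z.1 z.2 - L‖ * (D z.1 * D z.2) ≤ (ε/4) * (D z.1 * D z.2) :=
              mul_le_mul_of_nonneg_right hfl hDD
          _ ≤ B z := by
              rw [hBdef]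
              have t2 : 0 ≤ (2*M) * (K.indicator D z.1 * D z.2) := by
                apply mul_nonneg (by linarith) (mul_nonneg (hind0 _) (hD0 _))
              have t3 : 0 ≤ (2*M) * (D z.1 * K.indicator D z.2) := by
                apply mul_nonneg (by linarith) (mul_nonneg (hD0 _) (hind0 _))
              linarith
      · -- z.2 ∈ K
        have hz2K : z.2 ∈ K := ⟨hz.2, h2⟩
        have hindeq : K.indicator D z.2 = D z.2 := Set.indicator_of_mem hz2K D
        have hfl : ‖f z.1 z.2 - L‖ ≤ 2*M := by
          calc ‖f z.1 z.2 - L‖ ≤ ‖f z.1 z.2‖ + ‖L‖ := norm_sub_le _ _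
            _ ≤ M + M := add_le_add (hM (z.1, z.2) (Set.mk_mem_prod hz.1 hz.2)) hML
            _ = 2*M := by ring
        calc ‖f z.1 z.2 - L‖ * (D z.1 * D z.2) ≤ (2*M) * (D z.1 * D z.2) :=
              mul_le_mul_of_nonneg_right hfl hDD
          _ = (2*M) * (D z.1 * K.indicator D z.2) := by rw [hindeq]
          _ ≤ B z := by
              rw [hBdef]
              have t1 : 0 ≤ (ε/4) * (D z.1 * D z.2) := mul_nonneg (by linarith) hDD
              have t2 : 0 ≤ (2*M) * (K.indicator D z.1 * D z.2) := by
                apply mul_nonneg (by linarith) (mul_nonneg (hind0 _) (hD0 _))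
              linarith
    · -- z.1 ∈ K
      have hz1K : z.1 ∈ K := ⟨hz.1, h1⟩
      have hindeq : K.indicator D z.1 = D z.1 := Set.indicator_of_mem hz1K D
      have hfl : ‖f z.1 z.2 - L‖ ≤ 2*M := by
        calc ‖f z.1 z.2 - L‖ ≤ ‖f z.1 z.2‖ + ‖L‖ := norm_sub_le _ _
          _ ≤ M + M := add_le_add (hM (z.1, z.2) (Set.mk_mem_prod hz.1 hz.2)) hML
          _ = 2*M := by ring
      calc ‖f z.1 z.2 - L‖ * (D z.1 * D z.2) ≤ (2*M) * (D z.1 * D z.2) :=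
            mul_le_mul_of_nonneg_right hfl hDD
        _ = (2*M) * (K.indicator D z.1 * D z.2) := by rw [hindeq]
        _ ≤ B z := by
            rw [hBdef]
            have t1 : 0 ≤ (ε/4) * (D z.1 * D z.2) := mul_nonneg (by linarith) hDD
            have t3 : 0 ≤ (2*M) * (D z.1 * K.indicator D z.2) := by
              apply mul_nonneg (by linarith) (mul_nonneg (hD0 _) (hind0 _))
            linarith
  -- integral of bound
  have hindint : ∫ θ, K.indicator D θ ∂ν = r := by
    rw [integral_indicator hKm, hνdef, Measure.restrict_restrict hKm,
      Set.inter_eq_self_of_subset_left hKS, hrdef]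
  have hBint : ∫ z, B z ∂ν.prod ν = ε/4 + (2*M) * r + (2*M) * r := by
    have i1 : Integrable (fun z : (Fin m → ℝ) × (Fin m → ℝ) =>
        (ε/4) * (D z.1 * D z.2)) (ν.prod ν) := (hDi.mul_prod hDi).const_mul _
    have i2 : Integrable (fun z : (Fin m → ℝ) × (Fin m → ℝ) =>
        (2*M) * (K.indicator D z.1 * D z.2)) (ν.prod ν) :=
      ((hDi.indicator hKm).mul_prod hDi).const_mul _
    have i3 : Integrable (fun z : (Fin m → ℝ) × (Fin m → ℝ) =>
        (2*M) * (D z.1 * K.indicator D z.2)) (ν.prod ν) :=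
      (hDi.mul_prod (hDi.indicator hKm)).const_mul _
    have i12 : Integrable (fun z : (Fin m → ℝ) × (Fin m → ℝ) =>
        (ε/4) * (D z.1 * D z.2) + (2*M) * (K.indicator D z.1 * D z.2)) (ν.prod ν) :=
      i1.add i2
    rw [hBdef]
    rw [integral_add i12 i3, integral_add i1 i2]
    rw [integral_const_mul, integral_const_mul, integral_const_mul]
    rw [integral_prod_mul, integral_prod_mul, integral_prod_mul]
    rw [show (∫ x, D x ∂ν) = 1 from hD1, hindint]
    ring
  -- conclusion
  rw [Real.dist_eq, key, ← Real.norm_eq_abs]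
  calc ‖∫ z : (Fin m → ℝ) × (Fin m → ℝ), (f z.1 z.2 - L) * (D z.1 * D z.2) ∂ν.prod ν‖
      ≤ ∫ z : (Fin m → ℝ) × (Fin m → ℝ),
          ‖(f z.1 z.2 - L) * (D z.1 * D z.2)‖ ∂ν.prod ν :=
        norm_integral_le_integral_norm _
    _ ≤ ∫ z, B z ∂ν.prod ν := integral_mono_ae hsubi.norm hBi hptw
    _ = ε/4 + (2*M) * r + (2*M) * r := hBint
    _ < ε := by
        have hδ'eq : δ' * (16*M + 16) = ε := by
          rw [hδ'def]; field_simp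
        nlinarith [hδ'eq, hδ'pos, hr0, hrδ, hM0, hε, mul_nonneg hM0 hr0]
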